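/- Let f(x) = x^T Q x where Q is a real symmetric n×n matrix and let r ≥ 2 be an integer. Then f̲ − f_min^{(r−2)} ≤ (1/(r−1)) (f̄ − f̲). -/

import Mathlib

open Finset

noncomputable section

/-- Falling factorial `t^(d) = t (t-1) ⋯ (t-d+1)`. -/
def fall (t : ℝ) : ℕ → ℝ
  | 0 => 1
  | d + 1 => fall t d * (t - (d : ℝ))

/-- The regular grid `Δ(n,r) = {x ∈ Δ_n : r·x ∈ ℕ^n}`. -/
def regularGrid (n r : ℕ) : Set (Fin n → ℝ) :=
  {x ∈ stdSimplex ℝ (Fin n) | ∀ i, ∃ k : ℕ, (r : ℝ) * x i = (k : ℝ)}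

/-- `f_{Δ(n,r)}`, the minimum of `f` over the regular grid. -/
def minGrid (n r : ℕ) (f : (Fin n → ℝ) → ℝ) : ℝ :=
  sInf (f '' regularGrid n r)

/-- `f̲`, the minimum of `f` over the standard simplex. -/
def minSimplex (n : ℕ) (f : (Fin n → ℝ) → ℝ) : ℝ :=
  sInf (f '' stdSimplex ℝ (Fin n))

/-- `f̄`, the maximum of `f` over the standard simplex. -/
def maxSimplex (n : ℕ) (f : (Fin n → ℝ) → ℝ) : ℝ :=
  sSup (f '' stdSimplex ℝ (Fin n))

/-- The quadratic form `f(x) = xᵀ Q x`. -/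
def quadForm (n : ℕ) (Q : Matrix (Fin n) (Fin n) ℝ) (x : Fin n → ℝ) : ℝ :=
  ∑ i, ∑ j, Q i j * x i * x j

/-- The Pólya-type lower bound for the quadratic form `xᵀQx`:
`f_min^{(r-2)} = min_{α ∈ I(n,r)} [αᵀQα − Σ_i Q_ii α_i] / (r(r−1))`. -/
def quadPolya (n r : ℕ) (Q : Matrix (Fin n) (Fin n) ℝ) : ℝ :=
  sInf ((fun α : Fin n → ℕ =>
      ((∑ i, ∑ j, Q i j * (α i : ℝ) * (α j : ℝ)) - ∑ i, Q i i * (α i : ℝ)) /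
        ((r : ℝ) * ((r : ℝ) - 1))) ''
    {α : Fin n → ℕ | ∑ i, α i = r})

/-- for `f(x) = xᵀQx`, `Q` symmetric and `r ≥ 2`,
`f̲ − f_min^{(r−2)} ≤ (1/(r−1))(f̄ − f̲)`. -/
theorem statement3 (n r : ℕ) (hn : 0 < n) (hr : 2 ≤ r)
    (Q : Matrix (Fin n) (Fin n) ℝ) (hQ : Q.IsSymm) :
    minSimplex n (quadForm n Q) - quadPolya n r Q ≤
      (1 / ((r : ℝ) - 1)) * (maxSimplex n (quadForm n Q) - minSimplex n (quadForm n Q)) := by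
  have hrpos : (0:ℝ) < r := by
    have : (2:ℝ) ≤ r := by exact_mod_cast hr
    linarith
  have hr1 : (0:ℝ) < (r:ℝ) - 1 := by
    have : (2:ℝ) ≤ r := by exact_mod_cast hr
    linarith
  set f := quadForm n Q with hf
  have hcont : Continuous f := by
    unfold f
    unfold quadForm
    continuity
  have hS : IsCompact (stdSimplex ℝ (Fin n)) := isCompact_stdSimplex _ _
  have hSne : (stdSimplex ℝ (Fin n)).Nonempty := by
    have : Nonempty (Fin n) := ⟨⟨0, hn⟩⟩
    exact ⟨Pi.single this.some 1, single_mem_stdSimplex ℝ _⟩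
  have himg : IsCompact (f '' stdSimplex ℝ (Fin n)) := hS.image hcont
  have hbddB : BddBelow (f '' stdSimplex ℝ (Fin n)) := himg.bddBelow
  have hbddA : BddAbove (f '' stdSimplex ℝ (Fin n)) := himg.bddAbove
  have hneI : (f '' stdSimplex ℝ (Fin n)).Nonempty := hSne.image f
  set m := minSimplex n f with hm
  set M := maxSimplex n f with hM
  have hmle : ∀ x ∈ stdSimplex ℝ (Fin n), m ≤ f x := fun x hx =>
    csInf_le hbddB ⟨x, hx, rfl⟩
  have hleM : ∀ x ∈ stdSimplex ℝ (Fin n), f x ≤ M := fun x hx =>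
    le_csSup hbddA ⟨x, hx, rfl⟩
  -- diagonal entries
  have hdiag : ∀ i, Q i i ≤ M := by
    intro i
    have he : Pi.single i 1 ∈ stdSimplex ℝ (Fin n) := single_mem_stdSimplex ℝ i
    have hval : f (Pi.single i 1) = Q i i := by
      unfold f
      unfold quadForm
      rw [Finset.sum_eq_single i]
      · rw [Finset.sum_eq_single i]
        · simp
        · intro j _ hj; simp [Pi.single_apply, hj]
        · simp
      · intro j _ hj
        have : (Pi.single i 1 : Fin n → ℝ) j = 0 := by simp [Pi.single_apply, hj]
        simp [this]
      · simp
    calc Q i i = f (Pi.single i 1) := hval.symm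
      _ ≤ M := hleM _ he
  -- the key lower bound on quadPolya
  have hkey : ((r:ℝ) * m - M) / ((r:ℝ) - 1) ≤ quadPolya n r Q := by
    apply le_csInf
    · refine ⟨_, ⟨fun i => if i = ⟨0, hn⟩ then r else 0, ?_, rfl⟩⟩
      simp [Finset.sum_ite_eq']
    · rintro b ⟨α, hα, rfl⟩
      simp only [Set.mem_setOf_eq] at hα
      set x : Fin n → ℝ := fun i => (α i : ℝ) / r with hx
      have hxs : x ∈ stdSimplex ℝ (Fin n) := by
        constructor
        · intro i
          exact div_nonneg (Nat.cast_nonneg _) (le_of_lt hrpos)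
        · rw [← Finset.sum_div]
          rw [div_eq_one_iff_eq (ne_of_gt hrpos)]
          exact_mod_cast hα
      have hαx : ∀ i, (α i : ℝ) = r * x i := by
        intro i
        have hr0 : (r:ℝ) ≠ 0 := ne_of_gt hrpos
        simp only [hx]
        field_simp
      have hSval : (∑ i, ∑ j, Q i j * (α i : ℝ) * (α j : ℝ)) = (r:ℝ)^2 * f x := by
        unfold f
        unfold quadForm
        rw [Finset.mul_sum]
        apply Finset.sum_congr rfl
        intro i _
        rw [Finset.mul_sum]
        apply Finset.sum_congr rfl
        intro j _
        rw [hαx i, hαx j]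
        ring
      have hTval : (∑ i, Q i i * (α i : ℝ)) = (r:ℝ) * ∑ i, Q i i * x i := by
        rw [Finset.mul_sum]
        apply Finset.sum_congr rfl
        intro i _
        rw [hαx i]; ring
      have hq : ∑ i, Q i i * x i ≤ M := by
        calc ∑ i, Q i i * x i ≤ ∑ i, M * x i := by
              apply Finset.sum_le_sum
              intro i _
              exact mul_le_mul_of_nonneg_right (hdiag i) (hxs.1 i)
          _ = M := by rw [← Finset.mul_sum, hxs.2, mul_one]
      have hfx : m ≤ f x := hmle x hxs
      dsimp only
      rw [hSval, hTval]
      rw [div_le_div_iff₀ hr1 (by positivity)]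
      have h1 : (r:ℝ) * m - M ≤ (r:ℝ) * f x - ∑ i, Q i i * x i := by
        have := mul_le_mul_of_nonneg_left hfx (le_of_lt hrpos)
        linarith
      have h2 := mul_le_mul_of_nonneg_right h1 (le_of_lt (mul_pos hrpos hr1))
      nlinarith [h2]
  have hfin : m - quadPolya n r Q ≤ m - ((r:ℝ) * m - M) / ((r:ℝ) - 1) := by linarith
  calc m - quadPolya n r Q ≤ m - ((r:ℝ) * m - M) / ((r:ℝ) - 1) := hfin
    _ = (1 / ((r:ℝ) - 1)) * (M - m) := by field_simp; ring
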